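/- Let Q̄ be an imprecise probability tree and E_V the associated game-theoretic upper expectation. For every situation s ∈ 𝒳* and every non-increasing sequence (f_n)_{n∈ℕ₀} of finitary, bounded-above global variables (each f_n is an extended-real-valued global variable that is m-measurable for some m ∈ ℕ₀ and bounded above) that converges pointwise to a global variable f ∈ V̄, one has E_V(f | s) = lim_{n→∞} E_V(f_n | s). -/

import Mathlib

open Filter MeasureTheory
open scoped Classical ENNReal NNReal

namespace UEP

variable {X : Type*}

/-- The string of the first `n` states of a path `ω`. -/
def pref (ω : ℕ → X) (n : ℕ) : List X := List.ofFn (fun i : Fin n => ω i)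

/-- The cylinder event of a situation `s`. -/
def cyl (s : List X) : Set (ℕ → X) := {ω : ℕ → X | pref ω s.length = s}

/-- `f` depends only on the first `n` states. -/
def NMeas (n : ℕ) (f : (ℕ → X) → EReal) : Prop :=
  ∀ ω₁ ω₂ : ℕ → X, pref ω₁ n = pref ω₂ n → f ω₁ = f ω₂

/-- `f` is bounded below (by a real constant). -/
def IsBddBelow (f : (ℕ → X) → EReal) : Prop := ∃ c : ℝ, ∀ ω, (c : EReal) ≤ f ω

/-- `f` is bounded above (by a real constant). -/
def IsBddAbove (f : (ℕ → X) → EReal) : Prop := ∃ c : ℝ, ∀ ω, f ω ≤ (c : EReal)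

/-- `f` is real-valued and bounded. -/
def IsGambleVal (f : (ℕ → X) → EReal) : Prop :=
  ∃ a b : ℝ, ∀ ω, (a : EReal) ≤ f ω ∧ f ω ≤ (b : EReal)

/-- `f` is an `n`-measurable gamble. -/
def IsNGamble (n : ℕ) (f : (ℕ → X) → EReal) : Prop := NMeas n f ∧ IsGambleVal f

/-- `f` is a finitary gamble. -/
def IsFinitaryGamble (f : (ℕ → X) → EReal) : Prop := (∃ n, NMeas n f) ∧ IsGambleVal f

/-- `f` is finitary. -/
def IsFinitary (f : (ℕ → X) → EReal) : Prop := ∃ n, NMeas n f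

/-- pointwise convergence of a sequence of global variables. -/
def PtwLim (fs : ℕ → (ℕ → X) → EReal) (f : (ℕ → X) → EReal) : Prop :=
  ∀ ω, Tendsto (fun n => fs n ω) atTop (nhds (f ω))

/-- the sequence is uniformly bounded below. -/
def UnifBddBelow (fs : ℕ → (ℕ → X) → EReal) : Prop :=
  ∃ c : ℝ, ∀ n ω, (c : EReal) ≤ fs n ω

/-- `f` belongs to `V̄_{b,lim}`: bounded below and a pointwise limit of finitary gambles. -/
def Vblim (f : (ℕ → X) → EReal) : Prop :=
  IsBddBelow f ∧ ∃ fs : ℕ → (ℕ → X) → EReal,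
    (∀ n, IsFinitaryGamble (fs n)) ∧ PtwLim fs f

/-- A coherent upper expectation on the finite state space `X`. -/
def IsCoherent [Fintype X] (Q : (X → ℝ) → ℝ) : Prop :=
  (∀ f : X → ℝ, Q f ≤ ⨆ x, f x) ∧
  (∀ f g : X → ℝ, Q (fun x => f x + g x) ≤ Q f + Q g) ∧
  (∀ l : ℝ, 0 ≤ l → ∀ f : X → ℝ, Q (fun x => l * f x) = l * Q f)

/-- Axiom P1: compatibility with the local models. -/
def P1 (Q : List X → (X → ℝ) → ℝ) (E : ((ℕ → X) → EReal) → List X → EReal) : Prop :=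
  ∀ (s : List X) (f : X → ℝ),
    E (fun ω => (f (ω s.length) : EReal)) s = ((Q s f : ℝ) : EReal)

/-- Axiom P2. -/
def P2 (E : ((ℕ → X) → EReal) → List X → EReal) : Prop :=
  ∀ f : (ℕ → X) → EReal, IsFinitaryGamble f → ∀ s : List X,
    E f s = E (fun ω => if ω ∈ cyl s then f ω else 0) s

/-- Axiom P3 (inequality form). -/
def P3le (E : ((ℕ → X) → EReal) → List X → EReal) : Prop :=
  ∀ f : (ℕ → X) → EReal, IsFinitaryGamble f → ∀ (n : ℕ) (ω : ℕ → X),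
    E f (pref ω n) ≤ E (fun ω' => E f (pref ω' (n + 1))) (pref ω n)

/-- Axiom P3 with equality: the law of iterated upper expectations. -/
def P3eq (E : ((ℕ → X) → EReal) → List X → EReal) : Prop :=
  ∀ f : (ℕ → X) → EReal, IsFinitaryGamble f → ∀ (n : ℕ) (ω : ℕ → X),
    E f (pref ω n) = E (fun ω' => E f (pref ω' (n + 1))) (pref ω n)

/-- Axiom P4: monotonicity. -/
def P4 (E : ((ℕ → X) → EReal) → List X → EReal) : Prop :=
  ∀ f g : (ℕ → X) → EReal, (∀ ω, f ω ≤ g ω) → ∀ s : List X, E f s ≤ E g s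

/-- Axiom P5. -/
def P5 (E : ((ℕ → X) → EReal) → List X → EReal) : Prop :=
  ∀ (s : List X) (f : (ℕ → X) → EReal) (fs : ℕ → (ℕ → X) → EReal),
    (∀ n, IsFinitaryGamble (fs n)) → UnifBddBelow fs → PtwLim fs f →
    E f s ≤ limsup (fun n => E (fs n) s) atTop

/-- Axiom P6. -/
def P6 (E : ((ℕ → X) → EReal) → List X → EReal) : Prop :=
  ∀ f : (ℕ → X) → EReal, Vblim f → ∀ s : List X,
    ∃ fs : ℕ → (ℕ → X) → EReal,
      (∀ n, IsNGamble n (fs n)) ∧ UnifBddBelow fs ∧ PtwLim fs f ∧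
      limsup (fun n => E (fs n) s) atTop ≤ E f s

/-- Axiom P7. -/
def P7 (E : ((ℕ → X) → EReal) → List X → EReal) : Prop :=
  ∀ (f : (ℕ → X) → EReal) (s : List X),
    E f s = sInf {y : EReal | ∃ g : (ℕ → X) → EReal,
      Vblim g ∧ (∀ ω, f ω ≤ g ω) ∧ y = E g s}

/-- bundled axioms P1–P5. -/
def P15 (Q : List X → (X → ℝ) → ℝ) (E : ((ℕ → X) → EReal) → List X → EReal) : Prop :=
  P1 Q E ∧ P2 E ∧ P3le E ∧ P4 E ∧ P5 E

/-- `Qe` extends `Q` from gambles to extended-real variables. -/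
def ExtendsLocal [Fintype X] (Q : (X → ℝ) → ℝ) (Qe : (X → EReal) → EReal) : Prop :=
  ∀ f : X → ℝ, Qe (fun x => (f x : EReal)) = ((Q f : ℝ) : EReal)

/-- continuity with respect to upper cuts. -/
def UpperCutCont (Qe : (X → EReal) → EReal) : Prop :=
  ∀ f : X → EReal, (∃ c : ℝ, ∀ x, (c : EReal) ≤ f x) →
    Tendsto (fun c : ℝ => Qe (fun x => min (f x) (c : EReal))) atTop (nhds (Qe f))

/-- continuity with respect to lower cuts. -/
def LowerCutCont (Qe : (X → EReal) → EReal) : Prop :=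
  ∀ f : X → EReal,
    Tendsto (fun c : ℝ => Qe (fun x => max (f x) (c : EReal))) atBot (nhds (Qe f))

/-- `Qe` is the extension of the imprecise probability tree `Q` satisfying
continuity with respect to upper and lower cuts. -/
def LocalExtension [Fintype X] (Q : List X → (X → ℝ) → ℝ)
    (Qe : List X → (X → EReal) → EReal) : Prop :=
  ∀ s : List X, ExtendsLocal (Q s) (Qe s) ∧ UpperCutCont (Qe s) ∧ LowerCutCont (Qe s)

/-- supermartingale with respect to the extended local models `Qe`. -/
def IsSupermart (Qe : List X → (X → EReal) → EReal) (M : List X → EReal) : Prop :=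
  ∀ s : List X, Qe s (fun x => M (s ++ [x])) ≤ M s

/-- a bounded-below process. -/
def MBddBelow (M : List X → EReal) : Prop := ∃ c : ℝ, ∀ s : List X, (c : EReal) ≤ M s

/-- the game-theoretic upper expectation (Shafer–Vovk). -/
noncomputable def EV (Qe : List X → (X → EReal) → EReal)
    (f : (ℕ → X) → EReal) (s : List X) : EReal :=
  sInf {y : EReal | ∃ M : List X → EReal, MBddBelow M ∧ IsSupermart Qe M ∧
    (∀ ω ∈ cyl s, f ω ≤ liminf (fun n => M (pref ω n)) atTop) ∧ y = M s}

/-- a canonical path passing through the situation `s`. -/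
noncomputable def extPath [Nonempty X] (s : List X) : ℕ → X :=
  fun i => if h : i < s.length then s.get ⟨i, h⟩ else Classical.arbitrary X

/-- extended-real addition with the convention `(+∞) + (−∞) = (−∞) + (+∞) = +∞`. -/
noncomputable def eadd (a b : EReal) : EReal := if a = ⊤ ∨ b = ⊤ then ⊤ else a + b

/-- extended-real finite sums with the conventions `0·(±∞) = 0` and
`(+∞) + (−∞) = +∞`. -/
noncomputable def esum {α : Type*} (s : Finset α) (f : α → EReal) : EReal :=
  if ∃ x ∈ s, f x = ⊤ then ⊤ else ∑ x ∈ s, f x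

/-- the σ-algebra `ℱ` on paths generated by all cylinder events. -/
def cylSA (X : Type*) : MeasurableSpace (ℕ → X) :=
  MeasurableSpace.generateFrom {A : Set (ℕ → X) | ∃ s : List X, A = cyl s}

/-- a precise probability tree: a probability mass function in every situation. -/
def IsTree [Fintype X] (p : List X → X → ℝ) : Prop :=
  ∀ s : List X, (∀ x, 0 ≤ p s x) ∧ ∑ x, p s x = 1

/-- the `i`-th entry (0-based) of a list, i.e. the `(i+1)`-th state. -/
noncomputable def nthL [Nonempty X] (z : List X) (i : ℕ) : X :=
  z.getD i (Classical.arbitrary X)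

/-- `P` is the family of conditional probability measures on `ℱ` determined by
the precise probability tree `p` via the product formula on cylinder events. -/
def CylProp [Fintype X] [Nonempty X] (p : List X → X → ℝ)
    (P : List X → @Measure (ℕ → X) (cylSA X)) : Prop :=
  ∀ s z : List X,
    P s (cyl z) =
      if s.length < z.length ∧ z.take s.length = s then
        ∏ i ∈ Finset.Ico s.length z.length, ENNReal.ofReal (p (z.take i) (nthL z i))
      else if z.length ≤ s.length ∧ s.take z.length = z then 1 else 0

/-- the nonnegative part of an extended real, as an `ℝ≥0∞`. -/
noncomputable def toENN (a : EReal) : ℝ≥0∞ := if a = ⊤ then ⊤ else ENNReal.ofReal a.toReal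

/-- `∫ f⁺ dP`. -/
noncomputable def lpos (P : @Measure (ℕ → X) (cylSA X)) (f : (ℕ → X) → EReal) : ℝ≥0∞ :=
  @MeasureTheory.lintegral _ (cylSA X) P (fun ω => toENN (f ω))

/-- `∫ f⁻ dP`. -/
noncomputable def lneg (P : @Measure (ℕ → X) (cylSA X)) (f : (ℕ → X) → EReal) : ℝ≥0∞ :=
  @MeasureTheory.lintegral _ (cylSA X) P (fun ω => toENN (-(f ω)))

/-- the Lebesgue integral `∫ f dP = ∫ f⁺ dP − ∫ f⁻ dP`. -/
noncomputable def emeas (P : @Measure (ℕ → X) (cylSA X)) (f : (ℕ → X) → EReal) : EReal :=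
  (lpos P f : EReal) - (lneg P f : EReal)

/-- `ℱ`-measurability of a global variable. -/
def FMeasurable (f : (ℕ → X) → EReal) : Prop := @Measurable _ _ (cylSA X) _ f

/-- the Lebesgue integral `∫ f dP` exists. -/
def EMeasExists (P : @Measure (ℕ → X) (cylSA X)) (f : (ℕ → X) → EReal) : Prop :=
  FMeasurable f ∧ min (lpos P f) (lneg P f) < ⊤

/-- the upper integral `Ē¹`. -/
noncomputable def upInt1 (P : @Measure (ℕ → X) (cylSA X)) (f : (ℕ → X) → EReal) : EReal :=
  sInf {y : EReal | ∃ g : (ℕ → X) → EReal,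
    FMeasurable g ∧ IsBddBelow g ∧ (∀ ω, f ω ≤ g ω) ∧ y = emeas P g}

/-- the upper integral `Ē²`. -/
noncomputable def upInt2 (P : @Measure (ℕ → X) (cylSA X)) (f : (ℕ → X) → EReal) : EReal :=
  sInf {y : EReal | ∃ g : (ℕ → X) → EReal,
    EMeasExists P g ∧ (∀ ω, f ω ≤ g ω) ∧ y = emeas P g}

/-- the game-theoretic upper expectation with respect to a precise probability tree. -/
noncomputable def EVp [Fintype X] (p : List X → X → ℝ)
    (f : (ℕ → X) → EReal) (s : List X) : EReal :=
  sInf {y : EReal | ∃ M : List X → EReal, MBddBelow M ∧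
    (∀ t : List X, ∑ x, ((p t x : ℝ) : EReal) * M (t ++ [x]) ≤ M t) ∧
    (∀ ω ∈ cyl s, f ω ≤ liminf (fun n => M (pref ω n)) atTop) ∧ y = M s}

/-- the credal set of a coherent upper expectation. -/
def credal [Fintype X] (Q : (X → ℝ) → ℝ) : Set (X → ℝ) :=
  {q | (∀ x, 0 ≤ q x) ∧ (∑ x, q x = 1) ∧ ∀ f : X → ℝ, ∑ x, f x * q x ≤ Q f}

/-- a precise probability tree compatible with the imprecise probability tree `Q`. -/
def Compat [Fintype X] (Q : List X → (X → ℝ) → ℝ) (p : List X → X → ℝ) : Prop :=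
  ∀ s : List X, p s ∈ credal (Q s)

/-- the global measure-theoretic upper expectation. -/
noncomputable def Emeas [Fintype X] (Q : List X → (X → ℝ) → ℝ)
    (P : (List X → X → ℝ) → List X → @Measure (ℕ → X) (cylSA X))
    (f : (ℕ → X) → EReal) (s : List X) : EReal :=
  sSup {y : EReal | ∃ p : List X → X → ℝ, Compat Q p ∧ y = upInt1 (P p s) f}


set_option linter.unusedSectionVars false
lemma pref_length (ω : ℕ → X) (n : ℕ) : (pref ω n).length = n := by
  simp [pref]

lemma pref_eq_of {ω ω' : ℕ → X} {n : ℕ} (h : ∀ i < n, ω i = ω' i) :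
    pref ω n = pref ω' n := by
  unfold pref
  rw [List.ofFn_inj]
  funext i
  exact h i i.isLt

lemma eq_of_pref_eq {ω ω' : ℕ → X} {n : ℕ} (h : pref ω n = pref ω' n) :
    ∀ i < n, ω i = ω' i := by
  intro i hi
  have := List.ofFn_inj.mp h
  exact congrFun this ⟨i, hi⟩

lemma pref_eq_pref_of_le {ω ω' : ℕ → X} {m n : ℕ} (h : pref ω n = pref ω' n)
    (hm : m ≤ n) : pref ω m = pref ω' m :=
  pref_eq_of fun i hi => eq_of_pref_eq h i (lt_of_lt_of_le hi hm)

lemma pref_take {ω : ℕ → X} {m n : ℕ} (hm : m ≤ n) :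
    (pref ω n).take m = pref ω m := by
  apply List.ext_getElem
  · simp [pref, hm]
  · intro i h1 h2
    simp only [List.getElem_take, pref, List.getElem_ofFn]

lemma mem_cyl_pref (ω : ℕ → X) (k : ℕ) : ω ∈ cyl (pref ω k) := by
  show pref ω (pref ω k).length = pref ω k
  rw [pref_length]

lemma mem_cyl_iff {ω : ℕ → X} {t : List X} : ω ∈ cyl t ↔ pref ω t.length = t := Iff.rfl

lemma mem_cyl_pref_iff {ω ω' : ℕ → X} {k : ℕ} :
    ω' ∈ cyl (pref ω k) ↔ pref ω' k = pref ω k := by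
  rw [mem_cyl_iff, pref_length]

/-- EReal helper: if `a ≤ y + ε` for every `ε > 0` and `y ≠ ⊥`, then `a ≤ y`. -/
lemma ereal_le_of_forall_add {a y : EReal} (hy : y ≠ ⊥)
    (h : ∀ ε : ℝ, 0 < ε → a ≤ y + (ε : EReal)) : a ≤ y := by
  induction y with
  | bot => exact absurd rfl hy
  | top => exact le_top
  | coe r =>
    by_contra hlt
    push_neg at hlt
    rcases EReal.lt_iff_exists_real_btwn.mp hlt with ⟨z, hrz, hza⟩
    have hz : (0:ℝ) < z - r := by exact_mod_cast sub_pos.mpr (EReal.coe_lt_coe_iff.mp hrz)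
    have := h (z - r) hz
    rw [← EReal.coe_add] at this
    have : a ≤ (z : EReal) := by simpa using this
    exact absurd (lt_of_le_of_lt this hza) (lt_irrefl a)



section QL
variable [Fintype X] [Nonempty X] {Qs : (X → ℝ) → ℝ}

lemma Q_mono (hQ : IsCoherent Qs) {f g : X → ℝ} (h : ∀ x, f x ≤ g x) : Qs f ≤ Qs g := by
  have h1 : Qs (fun x => g x + (f x - g x)) ≤ Qs g + Qs (fun x => f x - g x) :=
    hQ.2.1 g (fun x => f x - g x)
  have h2 : (fun x => g x + (f x - g x)) = f := by funext x; ring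
  have h3 : Qs (fun x => f x - g x) ≤ ⨆ x, (f x - g x) := hQ.1 _
  have h4 : ⨆ x, (f x - g x) ≤ 0 := ciSup_le fun x => by linarith [h x]
  rw [h2] at h1
  linarith

lemma Q_const_le (hQ : IsCoherent Qs) (r : ℝ) : Qs (fun _ => r) ≤ r := by
  have := hQ.1 (fun _ => r)
  simpa using this

lemma Q_add_const (hQ : IsCoherent Qs) (f : X → ℝ) (r : ℝ) :
    Qs (fun x => f x + r) ≤ Qs f + r :=
  le_trans (hQ.2.1 f (fun _ => r)) (by linarith [Q_const_le hQ r])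

variable {Qes : (X → EReal) → EReal}

/-- On functions with values in a real interval, `Qes` is given by `Qs`. -/
lemma qe_eq (hext : ExtendsLocal Qs Qes) {h : X → EReal} {a b : ℝ}
    (hb : ∀ x, (a : EReal) ≤ h x ∧ h x ≤ (b : EReal)) :
    Qes h = ((Qs (fun x => (h x).toReal) : ℝ) : EReal) := by
  have : h = fun x => (((h x).toReal : ℝ) : EReal) := by
    funext x
    rw [EReal.coe_toReal (ne_top_of_le_ne_top (EReal.coe_ne_top b) (hb x).2)
      (ne_bot_of_le_ne_bot (EReal.coe_ne_bot a) ((hb x).1))]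
  calc Qes h = Qes (fun x => (((h x).toReal : ℝ) : EReal)) := by rw [← this]
    _ = _ := hext _

lemma qe_const_le (hQ : IsCoherent Qs) (hext : ExtendsLocal Qs Qes) (r : ℝ) :
    Qes (fun _ => (r : EReal)) ≤ (r : EReal) := by
  rw [show (fun _ : X => (r : EReal)) = (fun x => ((fun _ : X => r) x : EReal)) from rfl,
    hext]
  exact_mod_cast Q_const_le hQ r

/-- truncation above: `Qes (min h B) ≤ Qes h` for bounded-below `h`. -/
lemma qe_min_le (hQ : IsCoherent Qs) (hext : ExtendsLocal Qs Qes)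
    (hup : UpperCutCont Qes) {h : X → EReal} {c : ℝ} (hc : ∀ x, (c : EReal) ≤ h x)
    (B : ℝ) : Qes (fun x => min (h x) (B : EReal)) ≤ Qes h := by
  have htd := hup h ⟨c, hc⟩
  apply ge_of_tendsto htd
  filter_upwards [eventually_ge_atTop B] with d hd
  have hbd1 : ∀ x, ((min c B : ℝ) : EReal) ≤ min (h x) (B : EReal) ∧
      min (h x) (B : EReal) ≤ ((B : ℝ) : EReal) := fun x =>
    ⟨le_min (le_trans (by exact_mod_cast min_le_left c B) (hc x))
      (by exact_mod_cast min_le_right c B), min_le_right _ _⟩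
  have hbd2 : ∀ x, ((min c d : ℝ) : EReal) ≤ min (h x) (d : EReal) ∧
      min (h x) (d : EReal) ≤ ((d : ℝ) : EReal) := fun x =>
    ⟨le_min (le_trans (by exact_mod_cast min_le_left c d) (hc x))
      (by exact_mod_cast min_le_right c d), min_le_right _ _⟩
  rw [qe_eq hext hbd1, qe_eq hext hbd2, EReal.coe_le_coe_iff]
  apply Q_mono hQ
  intro x
  apply EReal.toReal_le_toReal
  · exact min_le_min le_rfl (by exact_mod_cast hd)
  · exact ne_bot_of_le_ne_bot (EReal.coe_ne_bot _) (hbd1 x).1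
  · exact ne_top_of_le_ne_top (EReal.coe_ne_top d) (hbd2 x).2

/-- adding a constant: `Qes (h + ε) ≤ Qes h + ε` for `h` with values in a real interval. -/
lemma qe_add_const (hQ : IsCoherent Qs) (hext : ExtendsLocal Qs Qes)
    {h : X → EReal} {a b : ℝ} (hb : ∀ x, (a : EReal) ≤ h x ∧ h x ≤ (b : EReal)) (ε : ℝ) :
    Qes (fun x => h x + (ε : EReal)) ≤ Qes h + (ε : EReal) := by
  have hb' : ∀ x, ((a + ε : ℝ) : EReal) ≤ h x + (ε : EReal) ∧
      h x + (ε : EReal) ≤ ((b + ε : ℝ) : EReal) := fun x => by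
    constructor
    · rw [EReal.coe_add]; exact add_le_add_left (hb x).1 _
    · rw [EReal.coe_add]; exact add_le_add_left (hb x).2 _
  rw [qe_eq hext hb', qe_eq hext hb, ← EReal.coe_add, EReal.coe_le_coe_iff]
  have : (fun x => (h x + (ε : EReal)).toReal) = fun x => (h x).toReal + ε := by
    funext x
    rw [EReal.toReal_add (ne_top_of_le_ne_top (EReal.coe_ne_top b) (hb x).2)
      (ne_bot_of_le_ne_bot (EReal.coe_ne_bot a) (hb x).1) (EReal.coe_ne_top ε)
      (EReal.coe_ne_bot ε), EReal.toReal_coe]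
  rw [this]
  exact Q_add_const hQ _ ε

end QL


section EVbase
variable [Fintype X] [Nonempty X] {Q : List X → (X → ℝ) → ℝ}
  {Qe : List X → (X → EReal) → EReal}

lemma EV_le_witness {f : (ℕ → X) → EReal} {s : List X} {M : List X → EReal}
    (h1 : MBddBelow M) (h2 : IsSupermart Qe M)
    (h3 : ∀ ω ∈ cyl s, f ω ≤ liminf (fun n => M (pref ω n)) atTop) :
    EV Qe f s ≤ M s :=
  sInf_le ⟨M, h1, h2, h3, rfl⟩

lemma EV_mono {f g : (ℕ → X) → EReal} (h : ∀ ω, f ω ≤ g ω) (s : List X) :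
    EV Qe f s ≤ EV Qe g s := by
  apply sInf_le_sInf
  rintro y ⟨M, hM1, hM2, hM3, rfl⟩
  exact ⟨M, hM1, hM2, fun ω hω => (h ω).trans (hM3 ω hω), rfl⟩

/-- lower cuts: `⨅ c, EV (f ⊔ -c) ≤ EV f`. -/
lemma EV_lowercut (f : (ℕ → X) → EReal) (s : List X) :
    ⨅ c : ℕ, EV Qe (fun ω => max (f ω) ((-(c : ℝ) : ℝ) : EReal)) s ≤ EV Qe f s := by
  apply le_sInf
  rintro y ⟨M, ⟨c₀, hc₀⟩, hM2, hM3, rfl⟩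
  obtain ⟨m, hm⟩ := exists_nat_ge (-c₀)
  calc ⨅ c : ℕ, EV Qe (fun ω => max (f ω) ((-(c : ℝ) : ℝ) : EReal)) s
      ≤ EV Qe (fun ω => max (f ω) ((-(m : ℝ) : ℝ) : EReal)) s := iInf_le _ m
    _ ≤ M s := by
        apply EV_le_witness ⟨c₀, hc₀⟩ hM2
        intro ω hω
        refine max_le (hM3 ω hω) ?_
        have h1 : ((-(m : ℝ) : ℝ) : EReal) ≤ (c₀ : EReal) := by
          exact_mod_cast neg_le.mpr hm
        refine h1.trans ?_
        calc (c₀ : EReal) = liminf (fun _ : ℕ => (c₀ : EReal)) atTop :=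
              (liminf_const _).symm
          _ ≤ liminf (fun n => M (pref ω n)) atTop :=
              liminf_le_liminf (Eventually.of_forall fun n => hc₀ _)

end EVbase

section Closed
variable [TopologicalSpace X] [DiscreteTopology X] [Finite X]

lemma isClosed_pref_pred (k : ℕ) (P : List X → Prop) :
    IsClosed {ω : ℕ → X | P (pref ω k)} := by
  have h : {ω : ℕ → X | P (pref ω k)} =
      (fun (ω : ℕ → X) (i : Fin k) => ω i) ⁻¹' {v | P (List.ofFn v)} := rfl
  rw [h]
  exact (isClosed_discrete _).preimage (continuous_pi fun i => continuous_apply _)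

end Closed

section Main
variable [Fintype X] [Nonempty X]

lemma main_bdd (Q : List X → (X → ℝ) → ℝ) (hQ : ∀ s, IsCoherent (Q s))
    (Qe : List X → (X → EReal) → EReal) (hQe : LocalExtension Q Qe)
    (s : List X) (g : ℕ → (ℕ → X) → EReal) (gl : (ℕ → X) → EReal) (c B : ℝ)
    (hmeas : ∀ n, ∃ m, NMeas m (g n))
    (hlb : ∀ n ω, ((-c : ℝ) : EReal) ≤ g n ω)
    (hub : ∀ n ω, g n ω ≤ (B : EReal))
    (hmono : ∀ n ω, g (n + 1) ω ≤ g n ω)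
    (hlim : ∀ ω, Tendsto (fun n => g n ω) atTop (nhds (gl ω))) :
    ⨅ n, EV Qe (g n) s ≤ EV Qe gl s := by
  have gant : ∀ ω, Antitone (fun n => g n ω) :=
    fun ω => antitone_nat_of_succ_le (fun n => hmono n ω)
  apply le_sInf
  rintro y ⟨M, ⟨c', hc'⟩, hsm, hdom, rfl⟩
  have hy : M s ≠ ⊥ := ne_bot_of_le_ne_bot (EReal.coe_ne_bot c') (hc' s)
  apply ereal_le_of_forall_add hy
  intro ε hε
  -- bounds on the limit
  have hglb : ∀ ω, ((-c : ℝ) : EReal) ≤ gl ω :=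
    fun ω => ge_of_tendsto (hlim ω) (Eventually.of_forall fun n => hlb n ω)
  have hgub : ∀ ω, gl ω ≤ (B : EReal) :=
    fun ω => le_of_tendsto (hlim ω) (Eventually.of_forall fun n => hub n ω)
  -- the truncated supermartingale M₁ = min (M ·) B
  set a₀ : ℝ := min c' B with ha₀
  set M₁ : List X → EReal := fun t => min (M t) (B : EReal) with hM₁
  have hM₁lb : ∀ t, (a₀ : EReal) ≤ M₁ t := fun t =>
    le_min (le_trans (by exact_mod_cast min_le_left c' B) (hc' t))
      (by exact_mod_cast min_le_right c' B)
  have hM₁ub : ∀ t, M₁ t ≤ (B : EReal) := fun t => min_le_right _ _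
  have hM₁bdd : ∀ t, ∀ x : X, (a₀ : EReal) ≤ M₁ (t ++ [x]) ∧ M₁ (t ++ [x]) ≤ (B : EReal) :=
    fun t x => ⟨hM₁lb _, hM₁ub _⟩
  have hsm₁ : IsSupermart Qe M₁ := by
    intro t
    have h1 : Qe t (fun x => min (M (t ++ [x])) (B : EReal)) ≤
        Qe t (fun x => M (t ++ [x])) :=
      qe_min_le (hQ t) (hQe t).1 (hQe t).2.1 (fun x => hc' _) B
    have h2 : Qe t (fun x => min (M (t ++ [x])) (B : EReal)) ≤ (B : EReal) := by
      rw [qe_eq (hQe t).1 (hM₁bdd t)]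
      have h3 : Q t (fun x => (M₁ (t ++ [x])).toReal) ≤ B := by
        refine le_trans (Q_mono (hQ t) (g := fun _ => B) ?_) (Q_const_le (hQ t) B)
        intro x
        apply EReal.toReal_le_toReal (hM₁ub _)
          (ne_bot_of_le_ne_bot (EReal.coe_ne_bot a₀) (hM₁lb _)) (EReal.coe_ne_top B)
      exact_mod_cast h3
    exact le_min (h1.trans (hsm t)) h2
  have hdom₁ : ∀ ω ∈ cyl s, gl ω ≤ liminf (fun k => M₁ (pref ω k)) atTop := by
    intro ω hω
    rw [le_liminf_iff]
    intro b hb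
    have hb1 : b < liminf (fun k => M (pref ω k)) atTop := lt_of_lt_of_le hb (hdom ω hω)
    have hb2 : b < (B : EReal) := lt_of_lt_of_le hb (hgub ω)
    filter_upwards [eventually_lt_of_lt_liminf hb1] with k hk
    exact lt_min hk hb2
  -- the key pointwise approximation property
  set D : List X → ℕ → Prop :=
    fun t n => ∀ ω', pref ω' t.length = t → g n ω' ≤ M₁ t + (ε : EReal) with hD
  have hDmono : ∀ t n n', n ≤ n' → D t n → D t n' := by
    intro t n n' hnn' h ω' hω'
    exact le_trans (gant ω' hnn') (h ω' hω')
  have key : ∀ ω ∈ cyl s, ∃ k n, s.length ≤ k ∧ D (pref ω k) n := by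
    intro ω hω
    set α : EReal := liminf (fun k => M₁ (pref ω k)) atTop with hα
    have hα1 : gl ω ≤ α := hdom₁ ω hω
    have hα2 : α ≤ (B : EReal) := by
      calc α ≤ liminf (fun _ : ℕ => (B : EReal)) atTop :=
            liminf_le_liminf (Eventually.of_forall fun k => hM₁ub _)
        _ = (B : EReal) := liminf_const _
    have hα3 : ((-c : ℝ) : EReal) ≤ α := le_trans (hglb ω) hα1
    set a : ℝ := α.toReal with haa
    have hαa : α = (a : EReal) :=
      (EReal.coe_toReal (ne_top_of_le_ne_top (EReal.coe_ne_top B) hα2)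
        (ne_bot_of_le_ne_bot (EReal.coe_ne_bot _) hα3)).symm
    have h5 : gl ω < ((a + ε / 2 : ℝ) : EReal) := by
      refine lt_of_le_of_lt (hα1.trans_eq hαa) ?_
      exact_mod_cast (by linarith : a < a + ε / 2)
    obtain ⟨n₀, hn₀⟩ := (Tendsto.eventually_lt_const h5 (hlim ω)).exists
    obtain ⟨m₀, hm₀⟩ := hmeas n₀
    have h7 : ((a - ε / 2 : ℝ) : EReal) < α := by
      rw [hαa]; exact_mod_cast (by linarith : a - ε / 2 < a)
    obtain ⟨k, hk1, hk2⟩ :=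
      ((eventually_lt_of_lt_liminf h7).and
        (eventually_ge_atTop (max m₀ s.length))).exists
    refine ⟨k, n₀, le_trans (le_max_right _ _) hk2, ?_⟩
    intro ω' hω'
    rw [pref_length] at hω'
    have heq : g n₀ ω' = g n₀ ω :=
      hm₀ ω' ω (pref_eq_pref_of_le hω' (le_trans (le_max_left _ _) hk2))
    rw [heq]
    calc g n₀ ω ≤ ((a + ε / 2 : ℝ) : EReal) := le_of_lt hn₀
      _ = ((a - ε / 2 : ℝ) : EReal) + (ε : EReal) := by
          rw [← EReal.coe_add, show a - ε / 2 + ε = a + ε / 2 by ring]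
      _ ≤ M₁ (pref ω k) + (ε : EReal) := add_le_add_left (le_of_lt hk1) _
  -- compactness: a uniform horizon J
  letI : TopologicalSpace X := ⊥
  haveI : DiscreteTopology X := ⟨rfl⟩
  set A : ℕ → Set (ℕ → X) :=
    fun j => {ω | pref ω s.length = s ∧
      ∀ k, s.length ≤ k → k ≤ j → ¬ D (pref ω k) j} with hA
  have hAanti : ∀ j, A (j + 1) ⊆ A j := by
    intro j ω hω
    exact ⟨hω.1, fun k hk1 hk2 hDk =>
      hω.2 k hk1 (hk2.trans (Nat.le_succ j)) (hDmono _ j (j + 1) (Nat.le_succ j) hDk)⟩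
  have hAclosed : ∀ j, IsClosed (A j) := by
    intro j
    have : A j = {ω : ℕ → X | pref ω s.length = s} ∩
        ⋂ (k : ℕ) (_ : s.length ≤ k) (_ : k ≤ j), {ω : ℕ → X | ¬ D (pref ω k) j} := by
      ext ω
      simp only [hA, Set.mem_setOf_eq, Set.mem_inter_iff, Set.mem_iInter]
    rw [this]
    exact (isClosed_pref_pred s.length (· = s)).inter
      (isClosed_iInter fun k => isClosed_iInter fun _ => isClosed_iInter fun _ =>
        isClosed_pref_pred k (fun t => ¬ D t j))
  have hAexJ : ∃ J, A J = ∅ := by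
    by_contra hne
    push_neg at hne
    have hnonempty : ∀ j, (A j).Nonempty := hne
    obtain ⟨ω, hω⟩ := IsCompact.nonempty_iInter_of_sequence_nonempty_isCompact_isClosed
      A hAanti hnonempty ((hAclosed 0).isCompact) hAclosed
    have hωA : ∀ j, ω ∈ A j := fun j => Set.mem_iInter.mp hω j
    obtain ⟨k, n, hk, hDk⟩ := key ω (hωA 0).1
    exact (hωA (max k n)).2 k hk (le_max_left _ _)
      (hDmono _ n (max k n) (le_max_right _ _) hDk)
  obtain ⟨J, hJ⟩ := hAexJ
  have hJ' : ∀ ω, pref ω s.length = s → ∃ k, s.length ≤ k ∧ k ≤ J ∧ D (pref ω k) J := by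
    intro ω hω
    by_contra h'
    push_neg at h'
    have : ω ∈ A J := ⟨hω, fun k hk1 hk2 hDk => h' k hk1 hk2 hDk⟩
    rw [hJ] at this
    exact this
  -- the stopped process
  set P : List X → ℕ → Prop :=
    fun t k => s.length ≤ k ∧ k ≤ J ∧ k ≤ t.length ∧ D (t.take k) J with hP
  set M' : List X → EReal :=
    fun t => if h : ∃ k, P t k then M₁ (t.take (Nat.find h)) else M₁ t with hM'
  have hM'cases : ∀ t, ∃ u : List X, M' t = M₁ u := by
    intro t
    simp only [hM']
    by_cases h : ∃ k, P t k
    · rw [dif_pos h]; exact ⟨_, rfl⟩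
    · rw [dif_neg h]; exact ⟨t, rfl⟩
  have hM'lb : ∀ t, (a₀ : EReal) ≤ M' t := fun t => by
    obtain ⟨u, hu⟩ := hM'cases t; rw [hu]; exact hM₁lb u
  have hM'ub : ∀ t, M' t ≤ (B : EReal) := fun t => by
    obtain ⟨u, hu⟩ := hM'cases t; rw [hu]; exact hM₁ub u
  have hM's : M' s = M₁ s := by
    simp only [hM']
    by_cases h : ∃ k, P s k
    · rw [dif_pos h]
      have hk := Nat.find_spec h
      have hfind : Nat.find h = s.length := le_antisymm hk.2.2.1 hk.1
      rw [hfind, List.take_length]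
    · rw [dif_neg h]
  have hPappend : ∀ t (x : X) k, k ≤ t.length → (P (t ++ [x]) k ↔ P t k) := by
    intro t x k hk
    have htake : (t ++ [x]).take k = t.take k := List.take_append_of_le_length hk
    simp only [hP, htake]
    constructor
    · rintro ⟨h1, h2, _, h4⟩; exact ⟨h1, h2, hk, h4⟩
    · rintro ⟨h1, h2, _, h4⟩
      refine ⟨h1, h2, ?_, h4⟩
      simp only [List.length_append]
      omega
  have hstep1 : ∀ t (x : X) (h : ∃ k, P t k), M' (t ++ [x]) = M' t := by
    intro t x h
    have hfle : Nat.find h ≤ t.length := (Nat.find_spec h).2.2.1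
    have h2 : ∃ k, P (t ++ [x]) k :=
      ⟨Nat.find h, (hPappend t x _ hfle).mpr (Nat.find_spec h)⟩
    have hle1 : Nat.find h2 ≤ Nat.find h :=
      Nat.find_le ((hPappend t x _ hfle).mpr (Nat.find_spec h))
    have hfle2 : Nat.find h2 ≤ t.length := le_trans hle1 hfle
    have hle2 : Nat.find h ≤ Nat.find h2 :=
      Nat.find_le ((hPappend t x _ hfle2).mp (Nat.find_spec h2))
    have heq : Nat.find h2 = Nat.find h := le_antisymm hle1 hle2
    simp only [hM', dif_pos h, dif_pos h2, heq, List.take_append_of_le_length hfle]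
  have hstep2 : ∀ t (x : X), ¬(∃ k, P t k) → M' (t ++ [x]) = M₁ (t ++ [x]) := by
    intro t x h
    simp only [hM']
    by_cases h2 : ∃ k, P (t ++ [x]) k
    · rw [dif_pos h2]
      have hk2 := Nat.find_spec h2
      have hlen : Nat.find h2 ≤ t.length + 1 := by
        have h3 := hk2.2.2.1
        simpa using h3
      have hne : ¬ (Nat.find h2 ≤ t.length) := fun hle =>
        h ⟨Nat.find h2, (hPappend t x _ hle).mp hk2⟩
      have heq : Nat.find h2 = t.length + 1 := by omega
      rw [heq, show t.length + 1 = (t ++ [x]).length by simp, List.take_length]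
    · rw [dif_neg h2]
  have hsm'' : IsSupermart Qe (fun t => M' t + (ε : EReal)) := by
    intro t
    have hbd : ∀ x : X, (a₀ : EReal) ≤ M' (t ++ [x]) ∧ M' (t ++ [x]) ≤ (B : EReal) :=
      fun x => ⟨hM'lb _, hM'ub _⟩
    have h1 : Qe t (fun x => M' (t ++ [x]) + (ε : EReal)) ≤
        Qe t (fun x => M' (t ++ [x])) + (ε : EReal) :=
      qe_add_const (hQ t) (hQe t).1 hbd ε
    refine h1.trans (add_le_add_left ?_ _)
    by_cases h : ∃ k, P t k
    · have hconst : (fun x : X => M' (t ++ [x])) = fun _ : X => M' t :=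
        funext fun x => hstep1 t x h
      rw [hconst]
      have hmt : M' t = (((M' t).toReal : ℝ) : EReal) :=
        (EReal.coe_toReal (ne_top_of_le_ne_top (EReal.coe_ne_top B) (hM'ub t))
          (ne_bot_of_le_ne_bot (EReal.coe_ne_bot a₀) (hM'lb t))).symm
      rw [hmt]
      exact qe_const_le (hQ t) (hQe t).1 _
    · have hfun : (fun x : X => M' (t ++ [x])) = fun x : X => M₁ (t ++ [x]) :=
        funext fun x => hstep2 t x h
      rw [hfun]
      calc Qe t (fun x => M₁ (t ++ [x])) ≤ M₁ t := hsm₁ t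
        _ = M' t := by simp only [hM', dif_neg h]
  have hdom'' : ∀ ω ∈ cyl s,
      g J ω ≤ liminf (fun m => M' (pref ω m) + (ε : EReal)) atTop := by
    intro ω hω
    obtain ⟨k₀, hk₀1, hk₀2, hk₀3⟩ := hJ' ω hω
    have hPm : ∀ m, J ≤ m → ∃ k, P (pref ω m) k := by
      intro m hm
      refine ⟨k₀, hk₀1, hk₀2, ?_, ?_⟩
      · rw [pref_length]; exact hk₀2.trans hm
      · rw [pref_take (hk₀2.trans hm)]; exact hk₀3
    have hchar : ∀ m, J ≤ m → ∀ k,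
        (P (pref ω m) k ↔ (s.length ≤ k ∧ k ≤ J ∧ D (pref ω k) J)) := by
      intro m hm k
      simp only [hP, pref_length]
      constructor
      · rintro ⟨h1, h2, h3, h4⟩
        rw [pref_take h3] at h4
        exact ⟨h1, h2, h4⟩
      · rintro ⟨h1, h2, h4⟩
        exact ⟨h1, h2, h2.trans hm, by rw [pref_take (h2.trans hm)]; exact h4⟩
    have hstable : ∀ m, J ≤ m → M' (pref ω m) = M' (pref ω J) := by
      intro m hm
      have e1 : ∃ k, P (pref ω m) k := hPm m hm
      have e2 : ∃ k, P (pref ω J) k := hPm J le_rfl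
      have hfeq : Nat.find e1 = Nat.find e2 := by
        apply le_antisymm
        · exact Nat.find_le ((hchar m hm _).mpr ((hchar J le_rfl _).mp (Nat.find_spec e2)))
        · exact Nat.find_le ((hchar J le_rfl _).mpr ((hchar m hm _).mp (Nat.find_spec e1)))
      have hk1J : Nat.find e2 ≤ J := ((hchar J le_rfl _).mp (Nat.find_spec e2)).2.1
      simp only [hM', dif_pos e1, dif_pos e2, hfeq]
      rw [pref_take (hk1J.trans hm), pref_take hk1J]
    have hlim' : liminf (fun m => M' (pref ω m) + (ε : EReal)) atTop
        = M' (pref ω J) + (ε : EReal) := by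
      rw [liminf_congr (by
        filter_upwards [eventually_ge_atTop J] with m hm
        rw [hstable m hm])]
      exact liminf_const _
    rw [hlim']
    have e2 : ∃ k, P (pref ω J) k := hPm J le_rfl
    obtain ⟨h1, h2, h4⟩ := (hchar J le_rfl _).mp (Nat.find_spec e2)
    have hval : M' (pref ω J) = M₁ (pref ω (Nat.find e2)) := by
      simp only [hM', dif_pos e2]
      rw [pref_take h2]
    rw [hval]
    exact h4 ω (by rw [pref_length])
  have hEVJ : EV Qe (g J) s ≤ M' s + (ε : EReal) := by
    exact EV_le_witness
      ⟨a₀ + ε, fun t => by rw [EReal.coe_add]; exact add_le_add_left (hM'lb t) _⟩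
      hsm'' hdom''
  calc ⨅ n, EV Qe (g n) s ≤ EV Qe (g J) s := iInf_le _ J
    _ ≤ M' s + (ε : EReal) := hEVJ
    _ = M₁ s + (ε : EReal) := by rw [hM's]
    _ ≤ M s + (ε : EReal) := add_le_add_left (min_le_left _ _) _

end Main


theorem stmt9 {X : Type*} [Fintype X] [Nonempty X]
    (Q : List X → (X → ℝ) → ℝ) (hQ : ∀ s, IsCoherent (Q s))
    (Qe : List X → (X → EReal) → EReal) (hQe : LocalExtension Q Qe)
    (s : List X) (fs : ℕ → (ℕ → X) → EReal) (f : (ℕ → X) → EReal)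
    (hfin : ∀ n, IsFinitary (fs n)) (hab : ∀ n, IsBddAbove (fs n))
    (hmono : ∀ (n : ℕ) (ω : ℕ → X), fs (n + 1) ω ≤ fs n ω) (hlim : PtwLim fs f) :
    Tendsto (fun n => EV Qe (fs n) s) atTop (nhds (EV Qe f s)) := by
  have gant : ∀ ω, Antitone fun n => fs n ω :=
    fun ω => antitone_nat_of_succ_le (fun n => hmono n ω)
  have hfle : ∀ n ω, f ω ≤ fs n ω := fun n ω =>
    le_of_tendsto (hlim ω) (by
      filter_upwards [eventually_ge_atTop n] with m hm
      exact gant ω hm)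
  have hEant : Antitone (fun n => EV Qe (fs n) s) :=
    antitone_nat_of_succ_le fun n => EV_mono (fun ω => hmono n ω) s
  have htd := tendsto_atTop_iInf hEant
  suffices hEq : EV Qe f s = ⨅ n, EV Qe (fs n) s by rw [hEq]; exact htd
  apply le_antisymm
  · exact le_iInf fun n => EV_mono (hfle n) s
  · refine le_trans (le_iInf fun m : ℕ => ?_) (EV_lowercut f s)
    obtain ⟨b₀, hb₀⟩ := hab 0
    have hub' : ∀ n ω, fs n ω ≤ (b₀ : EReal) := fun n ω =>
      le_trans (gant ω (Nat.zero_le n)) (hb₀ ω)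
    refine le_trans ?_ (main_bdd Q hQ Qe hQe s
      (fun n ω => max (fs n ω) ((-(m : ℝ) : ℝ) : EReal))
      (fun ω => max (f ω) ((-(m : ℝ) : ℝ) : EReal)) (m : ℝ) (max b₀ (-(m : ℝ)))
      ?_ ?_ ?_ ?_ ?_)
    · exact le_iInf fun n =>
        le_trans (iInf_le _ n) (EV_mono (fun ω => le_max_left _ _) s)
    · intro n
      obtain ⟨mn, hmn⟩ := hfin n
      exact ⟨mn, fun ω₁ ω₂ hp => by simp only; rw [hmn ω₁ ω₂ hp]⟩
    · exact fun n ω => le_max_right _ _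
    · intro n ω
      refine max_le (le_trans (hub' n ω) ?_) ?_
      · exact_mod_cast le_max_left b₀ (-(m : ℝ))
      · exact_mod_cast le_max_right b₀ (-(m : ℝ))
    · exact fun n ω => max_le_max (hmono n ω) le_rfl
    · intro ω
      exact (hlim ω).max tendsto_const_nhds


end UEP
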